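/- For every graph G, the sequence q*(G(b)) converges as b → ∞, and its limit equals q**(G) := sup_{b ∈ ℕ} q*(G(b)), where G(b) is the b-blow-up of G. Moreover q*(G(b)) ≥ q*(G) for every b ∈ ℕ. -/

import Mathlib

open Finset
open scoped Classical

/-- The number of edges of a finite graph. -/
noncomputable def edgeCount {V : Type} [Fintype V] [DecidableEq V] (G : SimpleGraph V) : ℕ :=
  G.edgeFinset.card

/-- vol(A): the sum over vertices of A of their degree in G. -/
noncomputable def degSum {V : Type} [Fintype V] [DecidableEq V] (G : SimpleGraph V)
    (A : Finset V) : ℕ :=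
  ∑ v ∈ A, G.degree v

/-- e(A): the number of edges of G with both endpoints in A. -/
noncomputable def intEdges {V : Type} [Fintype V] [DecidableEq V] (G : SimpleGraph V)
    (A : Finset V) : ℕ :=
  (G.edgeFinset.filter (fun e => ∀ v ∈ e, v ∈ A)).card

/-- The modularity score q_𝒜(G) of a vertex partition 𝒜 of G; it is 0 if G has no edges. -/
noncomputable def modScore {V : Type} [Fintype V] [DecidableEq V] (G : SimpleGraph V)
    (P : Finpartition (univ : Finset V)) : ℝ :=
  if edgeCount G = 0 then 0 else
    (∑ A ∈ P.parts, (intEdges G A : ℝ)) / (edgeCount G : ℝ)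
      - (∑ A ∈ P.parts, (degSum G A : ℝ) ^ 2) / (4 * (edgeCount G : ℝ) ^ 2)

/-- The modularity q*(G) of a graph: the maximum of q_𝒜(G) over all vertex partitions 𝒜. -/
noncomputable def modularity {V : Type} [Fintype V] [DecidableEq V] (G : SimpleGraph V) : ℝ :=
  ⨆ P : Finpartition (univ : Finset V), modScore G P

/-- The probability that the random subgraph G_p of G (each edge of G retained
independently with probability p) satisfies the predicate Q. -/
noncomputable def subgraphProb {V : Type} [Fintype V] [DecidableEq V] (G : SimpleGraph V)
    (p : ℝ) (Q : SimpleGraph V → Prop) : ℝ :=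
  ∑ F ∈ G.edgeFinset.powerset,
    if Q (SimpleGraph.fromEdgeSet (F : Set (Sym2 V))) then
      p ^ F.card * (1 - p) ^ (G.edgeFinset.card - F.card)
    else 0

/-- The b-blow-up G(b) of a graph G: each vertex is replaced by b copies, a copy of u
being adjacent to a copy of v iff uv is an edge of G (copies of the same vertex are
non-adjacent). -/
noncomputable def blowup {V : Type} (G : SimpleGraph V) (b : ℕ) :
    SimpleGraph (V × Fin b) :=
  SimpleGraph.comap Prod.fst G

lemma two_mul_intEdges {W : Type} [Fintype W] [DecidableEq W] (H : SimpleGraph W)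
    (A : Finset W) :
    2 * intEdges H A = ((A ×ˢ A).filter fun p => H.Adj p.1 p.2).card := by
  classical
  rw [intEdges, Finset.card_eq_sum_card_fiberwise
    (f := fun p : W × W => s(p.1, p.2)) (t := H.edgeFinset.filter (fun e => ∀ v ∈ e, v ∈ A))]
  · rw [Finset.sum_const_nat, mul_comm]
    intro e he
    induction e with
    | _ u v =>
      simp only [mem_filter, SimpleGraph.mem_edgeFinset, SimpleGraph.mem_edgeSet] at he
      have huv : H.Adj u v := he.1
      have hu : u ∈ A := he.2 u (by simp)
      have hv : v ∈ A := he.2 v (by simp)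
      have : ((A ×ˢ A).filter fun p => H.Adj p.1 p.2).filter
          (fun p => s(p.1, p.2) = s(u, v)) = {(u, v), (v, u)} := by
        ext ⟨x, y⟩
        simp only [mem_filter, mem_product, Sym2.eq_iff, Prod.mk.injEq,
          mem_insert, mem_singleton]
        constructor
        · rintro ⟨⟨_, _⟩, h | h⟩
          · left; exact ⟨h.1, h.2⟩
          · right; exact ⟨h.1, h.2⟩
        · rintro (⟨rfl, rfl⟩ | ⟨rfl, rfl⟩)
          · exact ⟨⟨⟨hu, hv⟩, huv⟩, Or.inl ⟨rfl, rfl⟩⟩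
          · exact ⟨⟨⟨hv, hu⟩, huv.symm⟩, Or.inr ⟨rfl, rfl⟩⟩
      rw [this, card_insert_of_notMem, card_singleton]
      simp only [mem_singleton, Prod.mk.injEq, not_and]
      intro h h'
      subst h
      exact H.loopless.irrefl _ huv
  · intro p hp
    simp only [coe_filter, mem_filter, mem_product] at hp
    simp only [coe_filter, mem_filter, SimpleGraph.mem_edgeFinset, SimpleGraph.mem_edgeSet]
    refine ⟨hp.2, ?_⟩
    intro v hv
    rw [Sym2.mem_iff] at hv
    rcases hv with rfl | rfl
    · exact hp.1.1
    · exact hp.1.2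
lemma two_mul_intEdges' {W : Type} [Fintype W] [DecidableEq W] (H : SimpleGraph W)
    (A : Finset W) :
    2 * intEdges H A = ∑ u ∈ A, ∑ v ∈ A, if H.Adj u v then 1 else 0 := by
  rw [two_mul_intEdges, Finset.card_filter, Finset.sum_product]

variable {V : Type} [Fintype V] [DecidableEq V] (G : SimpleGraph V)

/-- number of copies of `v` in `A` -/
noncomputable def cnt {b : ℕ} (A : Finset (V × Fin b)) (v : V) : ℕ :=
  (A.filter fun p => p.1 = v).card

lemma blowup_adj {b : ℕ} (p q : V × Fin b) : (blowup G b).Adj p q ↔ G.Adj p.1 q.1 :=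
  Iff.rfl

lemma blowup_degree {b : ℕ} (p : V × Fin b) :
    (blowup G b).degree p = b * G.degree p.1 := by
  classical
  have : (blowup G b).neighborFinset p = G.neighborFinset p.1 ×ˢ (univ : Finset (Fin b)) := by
    ext q
    simp [SimpleGraph.mem_neighborFinset, blowup_adj, mem_product]
  rw [SimpleGraph.degree, this, card_product, SimpleGraph.degree]
  simp [mul_comm]

lemma blowup_edgeCount (b : ℕ) : edgeCount (blowup G b) = b ^ 2 * edgeCount G := by
  classical
  have h1 := (blowup G b).sum_degrees_eq_twice_card_edges
  have h2 := G.sum_degrees_eq_twice_card_edges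
  have h3 : ∑ p : V × Fin b, (blowup G b).degree p = b ^ 2 * ∑ v : V, G.degree v := by
    rw [← Finset.univ_product_univ, Finset.sum_product]
    simp only [blowup_degree]
    rw [Finset.sum_comm]
    simp [Finset.mul_sum, Finset.sum_const, mul_comm, mul_assoc, mul_left_comm, sq]
    show ∑ _y : Fin b, ∑ x : V, b * G.degree x = _; simp [Finset.mul_sum]
  rw [h1, h2] at h3
  rw [edgeCount, edgeCount]
  have hr : 2 * (b ^ 2 * #G.edgeFinset) = b ^ 2 * (2 * #G.edgeFinset) := by ring
  omega

/-- fiberwise sum over a subset of a blowup -/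
lemma sum_fiber {b : ℕ} (A : Finset (V × Fin b)) (g : V → ℕ) :
    ∑ p ∈ A, g p.1 = ∑ v : V, cnt A v * g v := by
  classical
  rw [← Finset.sum_fiberwise' A Prod.fst g]
  refine Finset.sum_congr rfl fun v _ => ?_
  rw [Finset.sum_const, cnt, smul_eq_mul]

lemma degSum_blowup {b : ℕ} (A : Finset (V × Fin b)) :
    degSum (blowup G b) A = b * ∑ v : V, cnt A v * G.degree v := by
  classical
  rw [degSum]
  calc ∑ p ∈ A, (blowup G b).degree p = ∑ p ∈ A, b * G.degree p.1 := by
        exact Finset.sum_congr rfl fun p _ => blowup_degree G p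
    _ = ∑ v : V, cnt A v * (b * G.degree v) := sum_fiber A (fun v => b * G.degree v)
    _ = b * ∑ v : V, cnt A v * G.degree v := by
        rw [Finset.mul_sum]; exact Finset.sum_congr rfl fun v _ => by ring

lemma intEdges_blowup {b : ℕ} (A : Finset (V × Fin b)) :
    2 * intEdges (blowup G b) A
      = ∑ u : V, ∑ v : V, (if G.Adj u v then 1 else 0) * (cnt A u * cnt A v) := by
  classical
  rw [two_mul_intEdges']
  calc ∑ p ∈ A, ∑ q ∈ A, (if (blowup G b).Adj p q then 1 else 0)
      = ∑ p ∈ A, (∑ v : V, cnt A v * (if G.Adj p.1 v then 1 else 0)) := by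
        refine Finset.sum_congr rfl fun p _ => ?_
        exact sum_fiber A (fun v => if G.Adj p.1 v then 1 else 0)
    _ = ∑ u : V, cnt A u * (∑ v : V, cnt A v * (if G.Adj u v then 1 else 0)) :=
        sum_fiber A (fun w => ∑ v : V, cnt A v * (if G.Adj w v then 1 else 0))
    _ = ∑ u : V, ∑ v : V, (if G.Adj u v then 1 else 0) * (cnt A u * cnt A v) := by
        refine Finset.sum_congr rfl fun u _ => ?_
        rw [Finset.mul_sum]
        exact Finset.sum_congr rfl fun v _ => by ring

lemma sum_cnt_parts {b : ℕ} (P : Finpartition (univ : Finset (V × Fin b))) (v : V) :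
    ∑ A ∈ P.parts, cnt A v = b := by
  classical
  have hd : (P.parts : Set (Finset (V × Fin b))).PairwiseDisjoint id :=
    Finset.supIndep_iff_pairwiseDisjoint.1 P.supIndep
  have h1 : ∑ A ∈ P.parts, cnt A v
      = ∑ p ∈ P.parts.biUnion id, (if p.1 = v then 1 else 0) := by
    rw [Finset.sum_biUnion hd]
    refine (Finset.sum_congr rfl fun A _ => ?_).symm
    rw [cnt, Finset.card_filter]; rfl
  rw [h1, P.biUnion_parts, ← Finset.card_filter]
  have : (univ : Finset (V × Fin b)).filter (fun p => p.1 = v)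
      = {v} ×ˢ (univ : Finset (Fin b)) := by
    ext p
    simp only [Finset.mem_filter, Finset.mem_univ, true_and, Finset.mem_product,
      Finset.mem_singleton]
    constructor
    · intro h; exact ⟨h, trivial⟩
    · rintro ⟨h, -⟩; exact h
  rw [this, Finset.card_product, Finset.card_singleton, one_mul, Finset.card_univ,
    Fintype.card_fin]

/-- Σ_A Σ_u Σ_v α(u,v) n_u n_v -/
noncomputable def N1 {b : ℕ} (P : Finpartition (univ : Finset (V × Fin b))) : ℕ :=
  ∑ A ∈ P.parts, ∑ u : V, ∑ v : V, (if G.Adj u v then 1 else 0) * (cnt A u * cnt A v)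

/-- Σ_A (Σ_v n_v d_v)² -/
noncomputable def N2 {b : ℕ} (P : Finpartition (univ : Finset (V × Fin b))) : ℕ :=
  ∑ A ∈ P.parts, (∑ v : V, cnt A v * G.degree v) ^ 2

lemma alpha_total : ∑ u : V, ∑ v : V, (if G.Adj u v then 1 else 0) = 2 * edgeCount G := by
  classical
  have : ∀ u : V, ∑ v : V, (if G.Adj u v then 1 else 0) = G.degree u := by
    intro u
    rw [← Finset.card_filter]
    congr 1
    simp [SimpleGraph.neighborFinset_eq_filter]
  rw [Finset.sum_congr rfl fun u _ => this u, SimpleGraph.sum_degrees_eq_twice_card_edges]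
  rfl

lemma N1_le {b : ℕ} (P : Finpartition (univ : Finset (V × Fin b))) :
    N1 G P ≤ 2 * edgeCount G * b ^ 2 := by
  classical
  rw [N1, Finset.sum_comm]
  calc ∑ u : V, ∑ A ∈ P.parts, ∑ v : V, (if G.Adj u v then 1 else 0) * (cnt A u * cnt A v)
      = ∑ u : V, ∑ v : V, (if G.Adj u v then 1 else 0) * ∑ A ∈ P.parts, cnt A u * cnt A v := by
        refine Finset.sum_congr rfl fun u _ => ?_
        rw [Finset.sum_comm]
        exact Finset.sum_congr rfl fun v _ => (Finset.mul_sum _ _ _).symm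
    _ ≤ ∑ u : V, ∑ v : V, (if G.Adj u v then 1 else 0) * b ^ 2 := by
        refine Finset.sum_le_sum fun u _ => Finset.sum_le_sum fun v _ => ?_
        refine Nat.mul_le_mul_left _ ?_
        calc ∑ A ∈ P.parts, cnt A u * cnt A v ≤ ∑ A ∈ P.parts, cnt A u * b := by
              refine Finset.sum_le_sum fun A hA => Nat.mul_le_mul_left _ ?_
              have h := sum_cnt_parts P v
              calc cnt A v ≤ ∑ B ∈ P.parts, cnt B v :=
                    Finset.single_le_sum (f := fun B => cnt B v)
                      (fun _ _ => Nat.zero_le _) hA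
                _ = b := h
          _ = (∑ A ∈ P.parts, cnt A u) * b := by rw [Finset.sum_mul]
          _ = b * b := by rw [sum_cnt_parts]
          _ = b ^ 2 := (sq b).symm
    _ = (∑ u : V, ∑ v : V, (if G.Adj u v then 1 else 0)) * b ^ 2 := by
        rw [Finset.sum_mul]
        exact Finset.sum_congr rfl fun u _ => (Finset.sum_mul _ _ _).symm
    _ = 2 * edgeCount G * b ^ 2 := by rw [alpha_total]

lemma degSum_total {b : ℕ} (P : Finpartition (univ : Finset (V × Fin b))) :
    ∑ A ∈ P.parts, ∑ v : V, cnt A v * G.degree v = b * (2 * edgeCount G) := by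
  classical
  rw [Finset.sum_comm]
  calc ∑ v : V, ∑ A ∈ P.parts, cnt A v * G.degree v
      = ∑ v : V, b * G.degree v := by
        refine Finset.sum_congr rfl fun v _ => ?_
        rw [← Finset.sum_mul, sum_cnt_parts]
    _ = b * (2 * edgeCount G) := by
        rw [← Finset.mul_sum, SimpleGraph.sum_degrees_eq_twice_card_edges]; rfl

lemma N2_le {b : ℕ} (P : Finpartition (univ : Finset (V × Fin b))) :
    N2 G P ≤ 4 * b ^ 2 * edgeCount G ^ 2 := by
  classical
  have key : ∀ A ∈ P.parts, (∑ v : V, cnt A v * G.degree v) ^ 2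
      ≤ (∑ v : V, cnt A v * G.degree v) * (b * (2 * edgeCount G)) := by
    intro A hA
    rw [sq]
    refine Nat.mul_le_mul_left _ ?_
    calc ∑ v : V, cnt A v * G.degree v
        ≤ ∑ B ∈ P.parts, ∑ v : V, cnt B v * G.degree v :=
          Finset.single_le_sum (f := fun B => ∑ v : V, cnt B v * G.degree v)
            (fun _ _ => Nat.zero_le _) hA
      _ = b * (2 * edgeCount G) := degSum_total G P
  calc N2 G P ≤ ∑ A ∈ P.parts, (∑ v : V, cnt A v * G.degree v) * (b * (2 * edgeCount G)) :=
        Finset.sum_le_sum key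
    _ = (b * (2 * edgeCount G)) * (b * (2 * edgeCount G)) := by
        rw [← Finset.sum_mul, degSum_total]
    _ = 4 * b ^ 2 * edgeCount G ^ 2 := by ring

lemma modScore_blowup {b : ℕ} (hm : edgeCount G ≠ 0) (hb : b ≠ 0)
    (P : Finpartition (univ : Finset (V × Fin b))) :
    modScore (blowup G b) P
      = (N1 G P : ℝ) / (2 * b ^ 2 * edgeCount G)
        - (N2 G P : ℝ) / (4 * b ^ 2 * (edgeCount G : ℝ) ^ 2) := by
  classical
  have hmb : edgeCount (blowup G b) = b ^ 2 * edgeCount G := blowup_edgeCount G b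
  have hmb' : edgeCount (blowup G b) ≠ 0 := by
    rw [hmb]; positivity
  rw [modScore, if_neg hmb']
  have h1 : ∑ A ∈ P.parts, (intEdges (blowup G b) A : ℝ) = (N1 G P : ℝ) / 2 := by
    rw [eq_div_iff (two_ne_zero), Finset.sum_mul]
    rw [N1]
    push_cast
    refine Finset.sum_congr rfl fun A _ => ?_
    have := intEdges_blowup G A
    have h2 : ((2 * intEdges (blowup G b) A : ℕ) : ℝ)
        = ((∑ u : V, ∑ v : V, (if G.Adj u v then 1 else 0) * (cnt A u * cnt A v) : ℕ) : ℝ) := by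
      exact Nat.cast_inj.2 this
    push_cast at h2
    rw [mul_comm] at h2
    convert h2 using 2 <;> simp [apply_ite]
  have h2 : ∑ A ∈ P.parts, (degSum (blowup G b) A : ℝ) ^ 2
      = (b : ℝ) ^ 2 * (N2 G P : ℝ) := by
    rw [N2]
    push_cast
    rw [Finset.mul_sum]
    refine Finset.sum_congr rfl fun A _ => ?_
    have := degSum_blowup G A
    have h3 : ((degSum (blowup G b) A : ℕ) : ℝ)
        = ((b * ∑ v : V, cnt A v * G.degree v : ℕ) : ℝ) := Nat.cast_inj.2 this
    push_cast at h3
    rw [h3]; ring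
  rw [h1, h2, hmb]
  have hb' : (b : ℝ) ≠ 0 := Nat.cast_ne_zero.2 hb
  have hm' : (edgeCount G : ℝ) ≠ 0 := Nat.cast_ne_zero.2 hm
  push_cast
  field_simp

section Pullback
variable {W W' : Type} [Fintype W] [Fintype W'] [DecidableEq W] [DecidableEq W']

/-- pullback of a partition along a map -/
noncomputable def pullback (f : W' → W) (P : Finpartition (univ : Finset W)) :
    Finpartition (univ : Finset W') := by
  classical
  refine Finpartition.ofErase (P.parts.image fun A => univ.filter fun x => f x ∈ A) ?_ ?_
  · rw [Finset.supIndep_iff_pairwiseDisjoint]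
    intro s hs t ht hst
    simp only [Finset.coe_image, Set.mem_image, Finset.mem_coe] at hs ht
    obtain ⟨A, hA, rfl⟩ := hs
    obtain ⟨B, hB, rfl⟩ := ht
    have hAB : A ≠ B := fun h => hst (by rw [h])
    have hd : Disjoint A B := P.disjoint hA hB hAB
    simp only [id, Finset.disjoint_left, Finset.mem_filter]
    intro x hx hx'
    exact (Finset.disjoint_left.1 hd) hx.2 hx'.2
  · apply Finset.Subset.antisymm
    · intro x _; exact mem_univ x
    · intro x _
      have hfx : f x ∈ (univ : Finset W) := mem_univ _
      rw [← P.biUnion_parts, Finset.mem_biUnion] at hfx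
      obtain ⟨A, hA, hfA⟩ := hfx
      refine Finset.mem_sup.2 ⟨univ.filter fun y => f y ∈ A, ?_, ?_⟩
      · exact Finset.mem_image_of_mem _ hA
      · exact Finset.mem_filter.2 ⟨mem_univ _, hfA⟩

lemma pullback_parts (f : W' → W) (hf : Function.Surjective f)
    (P : Finpartition (univ : Finset W)) :
    (pullback f P).parts = P.parts.image fun A => univ.filter fun x => f x ∈ A := by
  classical
  rw [pullback]
  simp only [Finpartition.ofErase]
  rw [Finset.erase_eq_of_notMem]
  simp only [Finset.mem_image, bot_eq_empty, not_exists]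
  rintro A ⟨hA, h⟩
  obtain ⟨a, ha⟩ := P.nonempty_of_mem_parts hA
  obtain ⟨x, hx⟩ := hf a
  have : x ∈ univ.filter fun y => f y ∈ A := Finset.mem_filter.2 ⟨mem_univ _, hx ▸ ha⟩
  rw [h] at this
  exact absurd this (Finset.notMem_empty x)

lemma sum_pullback {M : Type} [AddCommMonoid M] (f : W' → W) (hf : Function.Surjective f)
    (P : Finpartition (univ : Finset W)) (g : Finset W' → M) :
    ∑ B ∈ (pullback f P).parts, g B
      = ∑ A ∈ P.parts, g (univ.filter fun x => f x ∈ A) := by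
  classical
  rw [pullback_parts f hf]
  refine Finset.sum_image ?_
  intro A hA B hB hAB
  by_contra hne
  have hd : Disjoint A B := P.disjoint hA hB hne
  obtain ⟨a, ha⟩ := P.nonempty_of_mem_parts hA
  obtain ⟨x, hx⟩ := hf a
  have h1 : x ∈ univ.filter fun y => f y ∈ A := Finset.mem_filter.2 ⟨mem_univ _, hx ▸ ha⟩
  have h2 : x ∈ univ.filter fun y => f y ∈ B := by
    have hAB' := hAB
    simp only at hAB'
    exact hAB' ▸ h1
  exact (Finset.disjoint_left.1 hd) ha (hx ▸ (Finset.mem_filter.1 h2).2)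

end Pullback

lemma cnt_lift {b : ℕ} (A : Finset V) (v : V) :
    cnt ((univ : Finset (V × Fin b)).filter fun p => p.1 ∈ A) v
      = if v ∈ A then b else 0 := by
  classical
  rw [cnt, Finset.filter_filter]
  by_cases hv : v ∈ A
  · rw [if_pos hv]
    have : ((univ : Finset (V × Fin b)).filter fun p => p.1 ∈ A ∧ p.1 = v)
        = {v} ×ˢ (univ : Finset (Fin b)) := by
      ext p
      simp only [Finset.mem_filter, Finset.mem_univ, true_and, Finset.mem_product,
        Finset.mem_singleton]
      constructor
      · rintro ⟨-, h⟩; exact ⟨h, trivial⟩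
      · rintro ⟨h, -⟩; exact ⟨h ▸ hv, h⟩
    rw [this, Finset.card_product, Finset.card_singleton, one_mul, Finset.card_univ,
      Fintype.card_fin]
  · rw [if_neg hv, Finset.card_eq_zero]
    ext p
    simp only [Finset.mem_filter, Finset.mem_univ, true_and, Finset.notMem_empty, iff_false,
      not_and]
    intro h1 h2
    exact hv (h2 ▸ h1)

lemma lift_N1_part {b : ℕ} (A : Finset V) :
    ∑ u : V, ∑ v : V, (if G.Adj u v then 1 else 0)
        * (cnt ((univ : Finset (V × Fin b)).filter fun p => p.1 ∈ A) u
          * cnt ((univ : Finset (V × Fin b)).filter fun p => p.1 ∈ A) v)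
      = b ^ 2 * (2 * intEdges G A) := by
  classical
  simp only [cnt_lift]
  rw [two_mul_intEdges']
  rw [← Finset.sum_subset (Finset.subset_univ A) (f := fun u => ∑ v : V,
    (if G.Adj u v then 1 else 0) * ((if u ∈ A then b else 0) * (if v ∈ A then b else 0)))]
  · rw [Finset.mul_sum]
    refine Finset.sum_congr rfl fun u hu => ?_
    rw [← Finset.sum_subset (Finset.subset_univ A) (f := fun v =>
      (if G.Adj u v then 1 else 0) * ((if u ∈ A then b else 0) * (if v ∈ A then b else 0)))]
    · rw [Finset.mul_sum]
      refine Finset.sum_congr rfl fun v hv => ?_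
      rw [if_pos hu, if_pos hv]
      ring
    · intro v _ hv
      rw [if_neg hv]
      ring
  · intro u _ hu
    rw [if_neg hu]
    simp

lemma lift_vol_part {b : ℕ} (A : Finset V) :
    ∑ v : V, cnt ((univ : Finset (V × Fin b)).filter fun p => p.1 ∈ A) v * G.degree v
      = b * degSum G A := by
  classical
  simp only [cnt_lift]
  rw [degSum, ← Finset.sum_subset (Finset.subset_univ A) (f := fun v =>
    (if v ∈ A then b else 0) * G.degree v)]
  · rw [Finset.mul_sum]
    refine Finset.sum_congr rfl fun v hv => ?_
    rw [if_pos hv]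
  · intro v _ hv
    rw [if_neg hv, zero_mul]

lemma modScore_lift (b : ℕ) (hb : b ≠ 0) (P : Finpartition (univ : Finset V)) :
    modScore (blowup G b) (pullback Prod.fst P) = modScore G P := by
  classical
  have hfs : Function.Surjective (Prod.fst : V × Fin b → V) := fun v =>
    ⟨(v, ⟨0, Nat.pos_of_ne_zero hb⟩), rfl⟩
  by_cases hm : edgeCount G = 0
  · have hmb : edgeCount (blowup G b) = 0 := by rw [blowup_edgeCount, hm, mul_zero]
    rw [modScore, modScore, if_pos hm, if_pos hmb]
  · rw [modScore_blowup G hm hb, modScore, if_neg hm]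
    have hN1 : N1 G (pullback (Prod.fst : V × Fin b → V) P)
        = 2 * b ^ 2 * ∑ A ∈ P.parts, intEdges G A := by
      rw [show 2 * b ^ 2 * ∑ A ∈ P.parts, intEdges G A
          = ∑ A ∈ P.parts, b ^ 2 * (2 * intEdges G A) by
        rw [Finset.mul_sum]; exact Finset.sum_congr rfl fun A _ => by ring]
      rw [N1, sum_pullback _ hfs P (fun B => ∑ u : V, ∑ v : V,
        (if G.Adj u v then 1 else 0) * (cnt B u * cnt B v))]
      exact Finset.sum_congr rfl fun A _ => lift_N1_part G A
    have hN2 : N2 G (pullback (Prod.fst : V × Fin b → V) P)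
        = b ^ 2 * ∑ A ∈ P.parts, degSum G A ^ 2 := by
      rw [show b ^ 2 * ∑ A ∈ P.parts, degSum G A ^ 2
          = ∑ A ∈ P.parts, (b * degSum G A) ^ 2 by
        rw [Finset.mul_sum]; exact Finset.sum_congr rfl fun A _ => by ring]
      rw [N2, sum_pullback _ hfs P (fun B => (∑ v : V, cnt B v * G.degree v) ^ 2)]
      exact Finset.sum_congr rfl fun A _ => by rw [lift_vol_part]
    rw [hN1, hN2]
    have hb' : (b : ℝ) ≠ 0 := Nat.cast_ne_zero.2 hb
    have hm' : (edgeCount G : ℝ) ≠ 0 := Nat.cast_ne_zero.2 hm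
    push_cast
    field_simp

section Bounds
variable {W : Type} [Fintype W] [DecidableEq W] (H : SimpleGraph W)

instance (s : Finset W) : Nonempty (Finpartition s) := ⟨⊥⟩

lemma sum_intEdges_le (P : Finpartition (univ : Finset W)) :
    ∑ A ∈ P.parts, intEdges H A ≤ edgeCount H := by
  classical
  have hdisj : ∀ A ∈ P.parts, ∀ B ∈ P.parts, A ≠ B →
      Disjoint (H.edgeFinset.filter fun e => ∀ v ∈ e, v ∈ A)
        (H.edgeFinset.filter fun e => ∀ v ∈ e, v ∈ B) := by
    intro A hA B hB hAB
    rw [Finset.disjoint_left]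
    intro e he he'
    simp only [Finset.mem_filter, SimpleGraph.mem_edgeFinset] at he he'
    induction e with
    | _ u v =>
      have hu : u ∈ A := he.2 u (by simp)
      have hu' : u ∈ B := he'.2 u (by simp)
      exact (Finset.disjoint_left.1 (P.disjoint hA hB hAB)) hu hu'
  calc ∑ A ∈ P.parts, intEdges H A
      = (P.parts.biUnion fun A => H.edgeFinset.filter fun e => ∀ v ∈ e, v ∈ A).card :=
        (Finset.card_biUnion hdisj).symm
    _ ≤ edgeCount H := by
        apply Finset.card_le_card
        intro e he
        rw [Finset.mem_biUnion] at he
        obtain ⟨A, -, he⟩ := he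
        exact (Finset.mem_filter.1 he).1

lemma modScore_le_one (P : Finpartition (univ : Finset W)) : modScore H P ≤ 1 := by
  classical
  rw [modScore]
  split
  · norm_num
  · rename_i hm
    have hm' : (0:ℝ) < edgeCount H := by positivity
    have h1 : (∑ A ∈ P.parts, (intEdges H A : ℝ)) / (edgeCount H : ℝ) ≤ 1 := by
      rw [div_le_one hm']
      have := sum_intEdges_le H P
      push_cast
      exact_mod_cast this
    have h2 : (0:ℝ) ≤ (∑ A ∈ P.parts, (degSum H A : ℝ) ^ 2) / (4 * (edgeCount H : ℝ) ^ 2) := by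
      positivity
    linarith

lemma bddAbove_modScore : BddAbove (Set.range fun P : Finpartition (univ : Finset W) =>
    modScore H P) :=
  (Set.finite_range _).bddAbove

lemma modularity_le_one : modularity H ≤ 1 :=
  ciSup_le fun P => modScore_le_one H P

lemma modularity_nonneg : 0 ≤ modularity H := by
  classical
  by_cases hm : edgeCount H = 0
  · have : modScore H ⊥ = 0 := by rw [modScore, if_pos hm]
    rw [← this]
    exact le_ciSup (bddAbove_modScore H) _
  · have hW : (univ : Finset W).Nonempty := by
      by_contra h
      rw [Finset.not_nonempty_iff_eq_empty, Finset.univ_eq_empty_iff] at h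
      have : H.edgeFinset = ∅ := Finset.eq_empty_of_isEmpty _
      exact hm (by rw [edgeCount, this, Finset.card_empty])
    set P := Finpartition.indiscrete (a := (univ : Finset W))
      (by simpa [bot_eq_empty, ← Finset.not_nonempty_iff_eq_empty] using hW) with hP
    have hparts : P.parts = {univ} := rfl
    have hint : intEdges H univ = edgeCount H := by
      rw [intEdges, edgeCount, Finset.filter_true_of_mem]
      intro e _ v _
      exact Finset.mem_univ v
    have hvol : (degSum H univ : ℝ) = 2 * edgeCount H := by
      rw [degSum]
      push_cast [SimpleGraph.sum_degrees_eq_twice_card_edges]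
      rfl
    have hscore : modScore H P = 0 := by
      rw [modScore, if_neg hm, hparts]
      rw [Finset.sum_singleton, Finset.sum_singleton, hint, hvol]
      have hm' : (edgeCount H : ℝ) ≠ 0 := Nat.cast_ne_zero.2 hm
      field_simp
      ring
    rw [← hscore]
    exact le_ciSup (bddAbove_modScore H) _

end Bounds

lemma part2 (b : ℕ) (hb : 1 ≤ b) : modularity G ≤ modularity (blowup G b) := by
  classical
  refine ciSup_le fun P => ?_
  rw [← modScore_lift G b (by omega) P]
  exact le_ciSup (bddAbove_modScore (blowup G b)) _

section Key
variable {a b : ℕ}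

/-- the map reducing copy indices mod `a` -/
def modmap {V : Type} (ha : 0 < a) (p : V × Fin b) : V × Fin a :=
  (p.1, ⟨p.2.val % a, Nat.mod_lt _ ha⟩)

lemma modmap_surjective (ha : 0 < a) (hab : a ≤ b) :
    Function.Surjective (modmap (V := V) (b := b) ha) := by
  rintro ⟨v, i⟩
  refine ⟨(v, ⟨i.val, lt_of_lt_of_le i.2 hab⟩), ?_⟩
  rw [modmap]
  refine Prod.ext rfl (Fin.ext ?_)
  exact Nat.mod_eq_of_lt i.2

lemma count_mod_lower (ha : 0 < a) (hab : a ≤ b) (i : Fin a) :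
    b / a ≤ ((univ : Finset (Fin b)).filter fun j => j.val % a = i.val).card := by
  classical
  have hka : b / a * a ≤ b := Nat.div_mul_le_self b a
  have hbound : ∀ t : Fin (b / a), i.val + t.val * a < b := by
    intro t
    have h1 : i.val + t.val * a < a + t.val * a := Nat.add_lt_add_right i.2 _
    have h2 : a + t.val * a = (t.val + 1) * a := by ring
    have h3 : (t.val + 1) * a ≤ (b / a) * a := Nat.mul_le_mul_right a t.2
    omega
  have h : (univ : Finset (Fin (b / a))).card
      ≤ ((univ : Finset (Fin b)).filter fun j => j.val % a = i.val).card := by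
    apply Finset.card_le_card_of_injOn
      (fun t : Fin (b / a) => (⟨i.val + t.val * a, hbound t⟩ : Fin b))
    · intro t _
      rw [Finset.mem_coe, Finset.mem_filter]
      refine ⟨Finset.mem_univ _, ?_⟩
      show (i.val + t.val * a) % a = i.val
      rw [Nat.add_mul_mod_self_right, Nat.mod_eq_of_lt i.2]
    · intro t1 _ t2 _ h
      have hv : i.val + t1.val * a = i.val + t2.val * a := by
        exact congrArg Fin.val h
      have : t1.val * a = t2.val * a := by omega
      exact Fin.ext (Nat.eq_of_mul_eq_mul_right ha this)
  simpa using h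

lemma count_mod_upper (ha : 0 < a) (i : Fin a) :
    ((univ : Finset (Fin b)).filter fun j => j.val % a = i.val).card ≤ b / a + 1 := by
  classical
  have hdiv : ∀ j : Fin b, j.val / a < b / a + 1 := by
    intro j
    have : j.val / a ≤ b / a := Nat.div_le_div_right (le_of_lt j.2)
    omega
  have h : ((univ : Finset (Fin b)).filter fun j => j.val % a = i.val).card
      ≤ (univ : Finset (Fin (b / a + 1))).card := by
    apply Finset.card_le_card_of_injOn
      (fun j : Fin b => (⟨j.val / a, hdiv j⟩ : Fin (b / a + 1)))
    · intro j _
      exact Finset.mem_univ _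
    · intro j1 h1 j2 h2 h
      simp only [Finset.coe_filter, Set.mem_setOf_eq] at h1 h2
      have hm : j1.val % a = j2.val % a := by rw [h1.2, h2.2]
      simp only [Fin.mk.injEq] at h
      exact Fin.ext (by rw [← Nat.div_add_mod j1.val a, ← Nat.div_add_mod j2.val a, h, hm])
  simpa using h

lemma cnt_eq_card_T {V : Type} [DecidableEq V] (A : Finset (V × Fin a)) (v : V) :
    cnt A v = ((univ : Finset (Fin a)).filter fun i => (v, i) ∈ A).card := by
  classical
  rw [cnt]
  refine Finset.card_bij' (fun p _ => p.2) (fun i _ => (v, i)) ?_ ?_ ?_ ?_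
  · intro p hp
    rw [Finset.mem_filter] at hp
    rw [Finset.mem_filter]
    refine ⟨Finset.mem_univ _, ?_⟩
    have hp' : p = (v, p.2) := Prod.ext_iff.2 ⟨hp.2, rfl⟩
    exact hp' ▸ hp.1
  · intro i hi
    rw [Finset.mem_filter] at hi
    rw [Finset.mem_filter]
    exact ⟨hi.2, rfl⟩
  · intro p hp
    rw [Finset.mem_filter] at hp
    exact (Prod.ext_iff.2 ⟨hp.2, rfl⟩ : p = (v, p.2)).symm
  · intro i _
    rfl

lemma cnt_pullback {V : Type} [DecidableEq V] [Fintype V] (ha : 0 < a) (hab : a ≤ b)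
    (A : Finset (V × Fin a)) (v : V) :
    b / a * cnt A v
      ≤ cnt ((univ : Finset (V × Fin b)).filter fun p => modmap ha p ∈ A) v
    ∧ cnt ((univ : Finset (V × Fin b)).filter fun p => modmap ha p ∈ A) v
      ≤ (b / a + 1) * cnt A v := by
  classical
  rw [cnt_eq_card_T]
  set T := (univ : Finset (Fin a)).filter fun i => (v, i) ∈ A with hT
  have hmain : cnt ((univ : Finset (V × Fin b)).filter fun p => modmap ha p ∈ A) v
      = ∑ i ∈ T, ((univ : Finset (Fin b)).filter fun j => j.val % a = i.val).card := by
    rw [cnt, Finset.filter_filter]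
    rw [Finset.card_eq_sum_card_fiberwise
      (f := fun p : V × Fin b => (⟨p.2.val % a, Nat.mod_lt _ ha⟩ : Fin a)) (t := T)]
    · refine Finset.sum_congr rfl fun i hi => ?_
      rw [hT, Finset.mem_filter] at hi
      refine Finset.card_bij' (fun p _ => p.2) (fun j _ => (v, j)) ?_ ?_ ?_ ?_
      · intro p hp
        rw [Finset.mem_filter] at hp
        rw [Finset.mem_filter]
        refine ⟨Finset.mem_univ _, ?_⟩
        exact congrArg Fin.val hp.2
      · intro j hj
        rw [Finset.mem_filter] at hj
        rw [Finset.mem_filter, Finset.mem_filter]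
        have hfib : (⟨j.val % a, Nat.mod_lt _ ha⟩ : Fin a) = i := Fin.ext hj.2
        refine ⟨⟨Finset.mem_univ _, ?_, rfl⟩, hfib⟩
        show modmap ha (v, j) ∈ A
        rw [modmap]
        show ((v, (⟨j.val % a, Nat.mod_lt _ ha⟩ : Fin a)) : V × Fin a) ∈ A
        rw [hfib]
        exact hi.2
      · intro p hp
        rw [Finset.mem_filter, Finset.mem_filter] at hp
        exact (Prod.ext_iff.2 ⟨hp.1.2.2, rfl⟩ : p = (v, p.2)).symm
      · intro j _
        rfl
    · intro p hp
      rw [Finset.mem_coe, Finset.mem_filter] at hp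
      rw [hT, Finset.mem_coe, Finset.mem_filter]
      refine ⟨Finset.mem_univ _, ?_⟩
      have h2 := hp.2.1
      rw [modmap] at h2
      rw [← hp.2.2]
      exact h2
  constructor
  · rw [hmain]
    calc b / a * T.card = ∑ _i ∈ T, b / a := by rw [Finset.sum_const, smul_eq_mul, mul_comm]
      _ ≤ _ := Finset.sum_le_sum fun i _ => count_mod_lower ha hab i
  · rw [hmain]
    calc ∑ i ∈ T, ((univ : Finset (Fin b)).filter fun j => j.val % a = i.val).card
        ≤ ∑ _i ∈ T, (b / a + 1) := Finset.sum_le_sum fun i _ => count_mod_upper ha i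
      _ = (b / a + 1) * T.card := by rw [Finset.sum_const, smul_eq_mul, mul_comm]

end Key

lemma N1_pullback_ge {a b : ℕ} (ha : 0 < a) (hab : a ≤ b)
    (P : Finpartition (univ : Finset (V × Fin a))) :
    (b / a) ^ 2 * N1 G P ≤ N1 G (pullback (modmap (V := V) (b := b) ha) P) := by
  classical
  have hfs := modmap_surjective (V := V) ha hab
  rw [N1, N1, sum_pullback _ hfs P (fun B => ∑ u : V, ∑ v : V,
    (if G.Adj u v then 1 else 0) * (cnt B u * cnt B v)), Finset.mul_sum]
  refine Finset.sum_le_sum fun A _ => ?_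
  rw [Finset.mul_sum]
  refine Finset.sum_le_sum fun u _ => ?_
  rw [Finset.mul_sum]
  refine Finset.sum_le_sum fun v _ => ?_
  have hu := (cnt_pullback ha hab A u).1
  have hv := (cnt_pullback ha hab A v).1
  calc (b / a) ^ 2 * ((if G.Adj u v then 1 else 0) * (cnt A u * cnt A v))
      = (if G.Adj u v then 1 else 0) * ((b / a * cnt A u) * (b / a * cnt A v)) := by ring
    _ ≤ (if G.Adj u v then 1 else 0)
        * (cnt ((univ : Finset (V × Fin b)).filter fun p => modmap ha p ∈ A) u
          * cnt ((univ : Finset (V × Fin b)).filter fun p => modmap ha p ∈ A) v) := by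
        exact Nat.mul_le_mul_left _ (Nat.mul_le_mul hu hv)

lemma N2_pullback_le {a b : ℕ} (ha : 0 < a) (hab : a ≤ b)
    (P : Finpartition (univ : Finset (V × Fin a))) :
    N2 G (pullback (modmap (V := V) (b := b) ha) P) ≤ (b / a + 1) ^ 2 * N2 G P := by
  classical
  have hfs := modmap_surjective (V := V) ha hab
  rw [N2, N2, sum_pullback _ hfs P (fun B => (∑ v : V, cnt B v * G.degree v) ^ 2),
    Finset.mul_sum]
  refine Finset.sum_le_sum fun A _ => ?_
  have hsum : ∑ v : V, cnt ((univ : Finset (V × Fin b)).filter fun p => modmap ha p ∈ A) v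
        * G.degree v
      ≤ (b / a + 1) * ∑ v : V, cnt A v * G.degree v := by
    rw [Finset.mul_sum]
    refine Finset.sum_le_sum fun v _ => ?_
    calc cnt ((univ : Finset (V × Fin b)).filter fun p => modmap ha p ∈ A) v * G.degree v
        ≤ ((b / a + 1) * cnt A v) * G.degree v :=
          Nat.mul_le_mul_right _ (cnt_pullback ha hab A v).2
      _ = (b / a + 1) * (cnt A v * G.degree v) := by ring
  calc (∑ v : V, cnt ((univ : Finset (V × Fin b)).filter fun p => modmap ha p ∈ A) v
        * G.degree v) ^ 2
      ≤ ((b / a + 1) * ∑ v : V, cnt A v * G.degree v) ^ 2 := Nat.pow_le_pow_left hsum 2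
    _ = (b / a + 1) ^ 2 * (∑ v : V, cnt A v * G.degree v) ^ 2 := by ring

set_option maxHeartbeats 2000000 in
lemma key_ineq {a b : ℕ} (hm : edgeCount G ≠ 0) (ha : 1 ≤ a) (hab : a ≤ b) :
    modularity (blowup G a) - 5 * a / b ≤ modularity (blowup G b) := by
  classical
  have ha' : 0 < a := ha
  have hb : b ≠ 0 := by omega
  obtain ⟨P, hP⟩ := Finite.exists_max (fun P : Finpartition (univ : Finset (V × Fin a)) =>
    modScore (blowup G a) P)
  have h1 : modularity (blowup G a) ≤ modScore (blowup G a) P := ciSup_le hP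
  set Q := pullback (modmap (V := V) (b := b) ha') P with hQ
  have h2 : modScore (blowup G b) Q ≤ modularity (blowup G b) :=
    le_ciSup (bddAbove_modScore (blowup G b)) Q
  have h3 : modScore (blowup G a) P - 5 * a / b ≤ modScore (blowup G b) Q := by
    rw [modScore_blowup G hm (by omega), modScore_blowup G hm hb]
    -- notation
    set k := b / a with hk
    set m := edgeCount G with hmdef
    have hk1 : k * a ≤ b := Nat.div_mul_le_self b a
    have hk2 : b ≤ k * a + a := by
      have h := Nat.div_add_mod b a
      have h2 : b % a ≤ a := le_of_lt (Nat.mod_lt _ ha')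
      calc b = a * k + b % a := h.symm
        _ ≤ a * k + a := Nat.add_le_add_left h2 _
        _ = k * a + a := by ring
    have hN1 : (k : ℝ) ^ 2 * N1 G P ≤ N1 G Q := by
      exact_mod_cast Nat.cast_le.2 (N1_pullback_ge G ha' hab P)
    have hN2 : (N2 G Q : ℝ) ≤ ((k : ℝ) + 1) ^ 2 * N2 G P := by
      have := N2_pullback_le G ha' hab P
      have hc : (N2 G Q : ℝ) ≤ ((k + 1 : ℕ) : ℝ) ^ 2 * N2 G P := by exact_mod_cast this
      push_cast at hc
      exact hc
    have hN1b : (N1 G P : ℝ) ≤ 2 * m * a ^ 2 := by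
      have := N1_le G P
      have hc : (N1 G P : ℝ) ≤ ((2 * edgeCount G * a ^ 2 : ℕ) : ℝ) := Nat.cast_le.2 this
      push_cast at hc
      linarith
    have hN2b : (N2 G P : ℝ) ≤ 4 * a ^ 2 * m ^ 2 := by
      have := N2_le G P
      have hc : (N2 G P : ℝ) ≤ ((4 * a ^ 2 * edgeCount G ^ 2 : ℕ) : ℝ) := Nat.cast_le.2 this
      push_cast at hc
      linarith
    have hk1' : (k : ℝ) * a ≤ b := by exact_mod_cast hk1
    have hk2' : (b : ℝ) ≤ k * a + a := by exact_mod_cast hk2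
    have hma : (1 : ℝ) ≤ m := by
      have : 1 ≤ edgeCount G := Nat.pos_of_ne_zero hm
      exact_mod_cast this
    have haR : (1 : ℝ) ≤ a := by exact_mod_cast ha
    have habR : (a : ℝ) ≤ b := by exact_mod_cast hab
    have hbR : (0 : ℝ) < b := by positivity
    have haR0 : (0 : ℝ) < a := by linarith
    have hm0 : (0 : ℝ) < m := by linarith
    have hkR : (0 : ℝ) ≤ k := Nat.cast_nonneg k
    have hN1Q : (0 : ℝ) ≤ N1 G Q := Nat.cast_nonneg _
    have hN2Q : (0 : ℝ) ≤ N2 G Q := Nat.cast_nonneg _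
    have hN1P : (0 : ℝ) ≤ N1 G P := Nat.cast_nonneg _
    have hN2P : (0 : ℝ) ≤ N2 G P := Nat.cast_nonneg _
    -- the cleared-denominator inequality
    have hE : 0 ≤ 2 * (a:ℝ)^2 * m * N1 G Q - (a:ℝ)^2 * N2 G Q + 20 * (a:ℝ)^3 * b * m^2
        - 2 * (b:ℝ)^2 * m * N1 G P + (b:ℝ)^2 * N2 G P := by
      have e1 : 2 * (a:ℝ)^2 * m * N1 G Q ≥ 2 * (a:ℝ)^2 * m * ((k:ℝ)^2 * N1 G P) := by
        have h2a : (0:ℝ) ≤ 2 * (a:ℝ)^2 * m := by positivity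
        nlinarith
      have e2 : (a:ℝ)^2 * N2 G Q ≤ (a:ℝ)^2 * (((k:ℝ)+1)^2 * N2 G P) := by
        have h2a : (0:ℝ) ≤ (a:ℝ)^2 := by positivity
        nlinarith
      -- first term bound: 2m N1P (b^2 - a^2 k^2) ≤ 8 a^3 b m^2
      have f1 : 2 * m * (N1 G P : ℝ) * ((b:ℝ)^2 - (a:ℝ)^2 * (k:ℝ)^2) ≤ 8 * (a:ℝ)^3 * (b:ℝ) * m^2 := by
        have hd1 : (b:ℝ) - a*k ≤ a := by nlinarith
        have hd2 : (b:ℝ) + a*k ≤ 2*b := by nlinarith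
        have hd0 : (0:ℝ) ≤ (b:ℝ) + a*k := by nlinarith
        have hX : (b:ℝ)^2 - (a:ℝ)^2 * (k:ℝ)^2 ≤ 2*(a:ℝ)*(b:ℝ) := by
          rcases le_or_gt ((b:ℝ) - a*k) 0 with hneg | hpos
          · nlinarith
          · nlinarith
        rcases le_or_gt ((b:ℝ)^2 - (a:ℝ)^2 * (k:ℝ)^2) 0 with hneg | hpos
        · have h0 : 2 * m * (N1 G P : ℝ) * ((b:ℝ)^2 - (a:ℝ)^2 * (k:ℝ)^2) ≤ 0 :=
            mul_nonpos_of_nonneg_of_nonpos (by positivity) hneg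
          have h1' : (0:ℝ) ≤ 8 * (a:ℝ)^3 * (b:ℝ) * m^2 := by positivity
          linarith
        · calc 2 * m * (N1 G P : ℝ) * ((b:ℝ)^2 - (a:ℝ)^2 * (k:ℝ)^2)
              ≤ 2 * m * (2*(m:ℝ)*(a:ℝ)^2) * ((b:ℝ)^2 - (a:ℝ)^2 * (k:ℝ)^2) := by
                nlinarith [mul_le_mul_of_nonneg_right hN1b (le_of_lt hpos)]
            _ ≤ 2 * m * (2*(m:ℝ)*(a:ℝ)^2) * (2*(a:ℝ)*(b:ℝ)) := by
                nlinarith [mul_le_mul_of_nonneg_left hX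
                  (show (0:ℝ) ≤ 2 * m * (2*(m:ℝ)*(a:ℝ)^2) by positivity)]
            _ = 8 * (a:ℝ)^3 * (b:ℝ) * m^2 := by ring
      -- second: N2P (a^2 (k+1)^2 - b^2) ≤ 12 a^3 b m^2
      have f2 : (N2 G P : ℝ) * ((a:ℝ)^2 * ((k:ℝ)+1)^2 - (b:ℝ)^2) ≤ 12 * (a:ℝ)^3 * (b:ℝ) * m^2 := by
        have hd1 : (a:ℝ) * ((k:ℝ)+1) - b ≤ a := by nlinarith
        have hd2 : (a:ℝ) * ((k:ℝ)+1) + b ≤ 3*b := by nlinarith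
        have hd0 : (0:ℝ) ≤ (a:ℝ) * ((k:ℝ)+1) + b := by nlinarith
        have hX : (a:ℝ)^2 * ((k:ℝ)+1)^2 - (b:ℝ)^2 ≤ 3*(a:ℝ)*(b:ℝ) := by
          rcases le_or_gt ((a:ℝ) * ((k:ℝ)+1) - b) 0 with hneg | hpos
          · nlinarith
          · nlinarith
        rcases le_or_gt ((a:ℝ)^2 * ((k:ℝ)+1)^2 - (b:ℝ)^2) 0 with hneg | hpos
        · have h0 : (N2 G P : ℝ) * ((a:ℝ)^2 * ((k:ℝ)+1)^2 - (b:ℝ)^2) ≤ 0 :=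
            mul_nonpos_of_nonneg_of_nonpos hN2P hneg
          have h1' : (0:ℝ) ≤ 12 * (a:ℝ)^3 * (b:ℝ) * m^2 := by positivity
          linarith
        · calc (N2 G P : ℝ) * ((a:ℝ)^2 * ((k:ℝ)+1)^2 - (b:ℝ)^2)
              ≤ (4*(a:ℝ)^2*(m:ℝ)^2) * ((a:ℝ)^2 * ((k:ℝ)+1)^2 - (b:ℝ)^2) := by
                nlinarith [mul_le_mul_of_nonneg_right hN2b (le_of_lt hpos)]
            _ ≤ (4*(a:ℝ)^2*(m:ℝ)^2) * (3*(a:ℝ)*(b:ℝ)) := by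
                nlinarith [mul_le_mul_of_nonneg_left hX
                  (show (0:ℝ) ≤ 4*(a:ℝ)^2*(m:ℝ)^2 by positivity)]
            _ = 12 * (a:ℝ)^3 * (b:ℝ) * m^2 := by ring
      nlinarith
    have hgoal : (N1 G P : ℝ) / (2 * a ^ 2 * m) - (N2 G P : ℝ) / (4 * a ^ 2 * (m:ℝ) ^ 2)
        - 5 * a / b
        ≤ (N1 G Q : ℝ) / (2 * b ^ 2 * m) - (N2 G Q : ℝ) / (4 * b ^ 2 * (m:ℝ) ^ 2) := by
      rw [← sub_nonneg]
      have hrw : (N1 G Q : ℝ) / (2 * b ^ 2 * m) - (N2 G Q : ℝ) / (4 * b ^ 2 * (m:ℝ) ^ 2)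
          - ((N1 G P : ℝ) / (2 * a ^ 2 * m) - (N2 G P : ℝ) / (4 * a ^ 2 * (m:ℝ) ^ 2)
            - 5 * a / b)
          = (2 * (a:ℝ)^2 * m * N1 G Q - (a:ℝ)^2 * N2 G Q + 20 * (a:ℝ)^3 * b * m^2
            - 2 * (b:ℝ)^2 * m * N1 G P + (b:ℝ)^2 * N2 G P)
            / (4 * (a:ℝ)^2 * (b:ℝ)^2 * m^2) := by
        field_simp
        ring
      rw [hrw]
      positivity
    exact hgoal
  linarith

lemma modularity_eq_zero_of_no_edges {W : Type} [Fintype W] [DecidableEq W]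
    (H : SimpleGraph W) (hm : edgeCount H = 0) : modularity H = 0 := by
  refine le_antisymm (ciSup_le fun P => le_of_eq ?_) (modularity_nonneg H)
  rw [modScore, if_pos hm]

/-- For every finite graph G, the sequence q*(G(b)) converges as b → ∞ to
q**(G) := sup_b q*(G(b)); moreover q*(G(b)) ≥ q*(G) for every b ≥ 1. -/
theorem statement15 (V : Type) [Fintype V] [DecidableEq V] (G : SimpleGraph V) :
    Filter.Tendsto (fun b : ℕ => modularity (blowup G b)) Filter.atTop
      (nhds (⨆ b : ℕ, modularity (blowup G b))) ∧
    ∀ b : ℕ, 1 ≤ b → modularity G ≤ modularity (blowup G b) := by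
  classical
  constructor
  · set f : ℕ → ℝ := fun b => modularity (blowup G b) with hf
    have hbdd : BddAbove (Set.range f) := by
      refine ⟨1, ?_⟩
      rintro x ⟨b, rfl⟩
      exact modularity_le_one _
    have hnn : ∀ b, 0 ≤ f b := fun b => modularity_nonneg _
    have hle : ∀ b, f b ≤ ⨆ b, f b := fun b => le_ciSup hbdd b
    set S := ⨆ b, f b with hS
    by_cases hm : edgeCount G = 0
    · have hz : ∀ b, f b = 0 := by
        intro b
        exact modularity_eq_zero_of_no_edges _ (by rw [blowup_edgeCount, hm, mul_zero])
      have hfz : f = fun _ => (0:ℝ) := funext hz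
      have hSz : S = 0 := by
        rw [hS, hfz]
        exact ciSup_const
      rw [hfz, hSz]
      exact tendsto_const_nhds
    · rw [Metric.tendsto_atTop]
      intro ε hε
      have hlt : S - ε / 2 < S := by linarith
      obtain ⟨a, ha⟩ := exists_lt_of_lt_ciSup hlt
      by_cases ha0 : a = 0
      · refine ⟨0, fun b _ => ?_⟩
        have hf0 : f a = 0 := by
          rw [ha0]
          exact modularity_eq_zero_of_no_edges _ (by
            rw [blowup_edgeCount]
            norm_num)
        have hSlt : S < ε / 2 := by rw [hf0] at ha; linarith
        rw [Real.dist_eq, abs_sub_lt_iff]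
        constructor
        · linarith [hle b, hnn b]
        · linarith [hle b, hnn b]
      · have ha1 : 1 ≤ a := Nat.pos_of_ne_zero ha0
        obtain ⟨M, hM⟩ := exists_nat_gt (10 * (a : ℝ) / ε)
        refine ⟨max a M, fun b hb => ?_⟩
        have hab : a ≤ b := le_trans (le_max_left a M) hb
        have hMb : (M : ℝ) ≤ b := by exact_mod_cast le_trans (le_max_right a M) hb
        have hb0 : (0 : ℝ) < b := by
          have : (0:ℝ) ≤ 10 * (a : ℝ) / ε := by positivity
          linarith
        have hsmall : 5 * (a : ℝ) / b < ε / 2 := by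
          rw [div_lt_iff₀ hb0]
          have h10 : 10 * (a : ℝ) < ε * M := by
            rw [div_lt_iff₀ hε] at hM
            linarith
          have : ε * M ≤ ε * b := by
            apply mul_le_mul_of_nonneg_left hMb (le_of_lt hε)
          nlinarith
        have hkey := key_ineq G hm ha1 hab
        have hfb : f a - 5 * (a:ℝ) / b ≤ f b := hkey
        rw [Real.dist_eq, abs_sub_lt_iff]
        constructor
        · linarith [hle b]
        · linarith [hle b]
  · intro b hb
    exact part2 G b hb
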